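/- Let 0 < s < 1, r > 0, and β with s^2 ≤ β ≤ 1 (arising as β = s² cos²θ + sin²θ). Define ψ(a) = a coth(a) - 1, φ(a) = sinh(a) - a, P₁ = 2√β (ψ(r√β) - ψ(r))/r, P₂² = 16(β - s²)(1 - β) ψ(r√β)²/β, and P₃ = (1/(2β√β)) ( (s²/√β) φ(2r√β) - β² φ(2r) + 4r(β - s²)(1 - β) ψ(r√β) ). If s² < β < 1, then P₂² - 4 P₁ P₃ < 0. -/

import Mathlib

noncomputable def coth (x : ℝ) : ℝ := Real.cosh x / Real.sinh x

noncomputable def ψ (a : ℝ) : ℝ := a * coth a - 1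

noncomputable def φ (a : ℝ) : ℝ := Real.sinh a - a

open Real Set

lemma my_mono (f f' : ℝ → ℝ) {a b : ℝ} (hab : a < b)
    (hf : ∀ x ∈ Icc a b, HasDerivAt f (f' x) x)
    (hpos : ∀ x ∈ Ioo a b, 0 < f' x) : f a < f b := by
  have h : StrictMonoOn f (Icc a b) := by
    apply strictMonoOn_of_deriv_pos (convex_Icc a b)
    · intro x hx; exact (hf x hx).continuousAt.continuousWithinAt
    · intro x hx
      rw [interior_Icc] at hx
      rw [(hf x (mem_Icc_of_Ioo hx)).deriv]
      exact hpos x hx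
  exact h (left_mem_Icc.mpr hab.le) (right_mem_Icc.mpr hab.le) hab

lemma my_anti (f f' : ℝ → ℝ) {a b : ℝ} (hab : a < b)
    (hf : ∀ x ∈ Icc a b, HasDerivAt f (f' x) x)
    (hneg : ∀ x ∈ Ioo a b, f' x < 0) : f b < f a := by
  have h1 : (fun x => -f x) a < (fun x => -f x) b :=
    my_mono (fun x => -f x) (fun x => -f' x) hab
      (fun x hx => (hf x hx).neg) (fun x hx => by simpa using hneg x hx)
  have h2 : -f a < -f b := h1
  linarith

lemma num_pos {x : ℝ} (hx : 0 < x) : 0 < x * Real.cosh x - Real.sinh x := by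
  have h := my_mono (fun t => t * Real.cosh t - Real.sinh t) (fun t => t * Real.sinh t) hx
    (fun t _ => by
      have h1 : HasDerivAt (fun t : ℝ => t * Real.cosh t) (1 * Real.cosh t + t * Real.sinh t) t :=
        (hasDerivAt_id t).mul (Real.hasDerivAt_cosh t)
      have h2 := h1.sub (Real.hasDerivAt_sinh t)
      beta_reduce
      exact h2.congr_deriv (by ring))
    (fun t ht => by beta_reduce; exact mul_pos ht.1 (Real.sinh_pos_iff.mpr ht.1))
  simpa using h

lemma psi_eq (x : ℝ) (hx : Real.sinh x ≠ 0) :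
    ψ x = (x * Real.cosh x - Real.sinh x) / Real.sinh x := by
  unfold ψ coth; field_simp

lemma psi_pos {x : ℝ} (hx : 0 < x) : 0 < ψ x := by
  have hS := Real.sinh_pos_iff.mpr hx
  rw [psi_eq x hS.ne']
  exact div_pos (num_pos hx) hS

lemma hasDerivAt_psi {a : ℝ} (ha : 0 < a) :
    HasDerivAt ψ ((Real.sinh a * Real.cosh a - a) / (Real.sinh a) ^ 2) a := by
  have hS : 0 < Real.sinh a := Real.sinh_pos_iff.mpr ha
  have h1 : HasDerivAt (fun x : ℝ => x * Real.cosh x) (1 * Real.cosh a + a * Real.sinh a) a :=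
    (hasDerivAt_id a).mul (Real.hasDerivAt_cosh a)
  have h2 := (h1.div (Real.hasDerivAt_sinh a) hS.ne').sub_const 1
  have h3 : HasDerivAt (fun x => x * Real.cosh x / Real.sinh x - 1)
      ((Real.sinh a * Real.cosh a - a) / (Real.sinh a) ^ 2) a := by
    refine h2.congr_deriv ?_
    rw [div_eq_div_iff (by positivity) (by positivity)]
    linear_combination (-a) * Real.sinh a ^ 2 * (Real.cosh_sq_sub_sinh_sq a)
  apply h3.congr_of_eventuallyEq
  have hopen : IsOpen {x : ℝ | 0 < Real.sinh x} := isOpen_lt continuous_const Real.continuous_sinh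
  filter_upwards [hopen.mem_nhds (show a ∈ _ from hS)] with x hx
  unfold ψ coth; field_simp

lemma psi_deriv_pos {a : ℝ} (ha : 0 < a) :
    0 < (Real.sinh a * Real.cosh a - a) / (Real.sinh a) ^ 2 := by
  have h2 : 2 * a < Real.sinh (2 * a) := Real.self_lt_sinh_iff.mpr (by linarith)
  rw [Real.sinh_two_mul] at h2
  have hS := Real.sinh_pos_iff.mpr ha
  apply div_pos (by nlinarith) (by positivity)

lemma psi_mono {x y : ℝ} (hx : 0 < x) (hxy : x < y) : ψ x < ψ y :=
  my_mono ψ (fun a => (Real.sinh a * Real.cosh a - a) / (Real.sinh a) ^ 2) hxy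
    (fun a haI => hasDerivAt_psi (lt_of_lt_of_le hx haI.1))
    (fun a haI => psi_deriv_pos (hx.trans haI.1))

lemma phi_pos {x : ℝ} (hx : 0 < x) : 0 < φ x := by
  have := Real.self_lt_sinh_iff.mpr hx
  unfold φ; linarith

lemma sinh_conv {b t : ℝ} (hb0 : 0 < b) (hb1 : b < 1) (ht : 0 < t) :
    Real.sinh (b * t) < b * Real.sinh t := by
  have h := my_mono (fun t => b * Real.sinh t - Real.sinh (b * t))
    (fun t => b * Real.cosh t - Real.cosh (b * t) * b) ht
    (fun t _ => by
      have h1 := (Real.hasDerivAt_sinh t).const_mul b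
      have hlin : HasDerivAt (fun x : ℝ => b * x) b t := by
        simpa using (hasDerivAt_id t).const_mul b
      beta_reduce
      exact h1.sub hlin.sinh)
    (fun t htI => by
      beta_reduce
      have hc : Real.cosh (b * t) < Real.cosh t := by
        rw [Real.cosh_lt_cosh, abs_of_pos (mul_pos hb0 htI.1), abs_of_pos htI.1]
        nlinarith [htI.1]
      nlinarith)
  simpa using h

lemma lemA {b r : ℝ} (hb0 : 0 < b) (hb1 : b < 1) (hr : 0 < r) :
    φ (2 * (r * b)) < b ^ 3 * φ (2 * r) := by
  have key := my_mono (fun t => b ^ 3 * φ (2 * t) - φ (2 * (t * b)))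
    (fun t => b ^ 3 * (Real.cosh (2 * t) * 2 - 2) - (Real.cosh (2 * (t * b)) * (2 * b) - 2 * b)) hr
    (fun t _ => by
      beta_reduce
      have hl1 : HasDerivAt (fun t : ℝ => 2 * t) 2 t := by
        simpa using (hasDerivAt_id t).const_mul 2
      have hl2 : HasDerivAt (fun t : ℝ => 2 * (t * b)) (2 * b) t := by
        have := ((hasDerivAt_id t).mul_const b).const_mul 2
        simpa using this
      have h1 : HasDerivAt (fun t : ℝ => φ (2 * t)) (Real.cosh (2 * t) * 2 - 2) t := by
        have := (hl1.sinh).sub hl1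
        unfold φ
        exact this
      have h2 : HasDerivAt (fun t : ℝ => φ (2 * (t * b)))
          (Real.cosh (2 * (t * b)) * (2 * b) - 2 * b) t := by
        have := (hl2.sinh).sub hl2
        unfold φ
        exact this
      exact (h1.const_mul (b ^ 3)).sub h2)
    (fun t htI => by
      beta_reduce
      have ht0 := htI.1
      have hs := sinh_conv hb0 hb1 ht0
      have hsp : 0 < Real.sinh (b * t) := Real.sinh_pos_iff.mpr (mul_pos hb0 ht0)
      have hc1 : Real.cosh (2 * t) - 1 = 2 * Real.sinh t ^ 2 := by
        rw [Real.cosh_two_mul]; nlinarith [Real.cosh_sq_sub_sinh_sq t]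
      have hc2 : Real.cosh (2 * (t * b)) - 1 = 2 * Real.sinh (t * b) ^ 2 := by
        rw [Real.cosh_two_mul]; nlinarith [Real.cosh_sq_sub_sinh_sq (t * b)]
      rw [mul_comm b t] at hs hsp
      have e : b ^ 3 * (Real.cosh (2 * t) * 2 - 2) - (Real.cosh (2 * (t * b)) * (2 * b) - 2 * b) =
          4 * b * ((b * Real.sinh t) ^ 2 - Real.sinh (t * b) ^ 2) := by
        linear_combination (2 * b ^ 3) * hc1 + (-2 * b) * hc2
      rw [e]
      apply mul_pos (by positivity)
      nlinarith [mul_lt_mul'' hs hs hsp.le hsp.le])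
  have key2 : (0:ℝ) < b ^ 3 * φ (2 * r) - φ (2 * (r * b)) := by
    simpa [φ] using key
  linarith

lemma lemC {a : ℝ} (ha : 0 < a) : 4 * (a * Real.cosh a - Real.sinh a) ≤ φ (2 * a) := by
  have key := my_mono (fun t => Real.sinh t * (Real.cosh t + 2) - t * (2 * Real.cosh t + 1))
    (fun t => (Real.cosh t * (Real.cosh t + 2) + Real.sinh t * Real.sinh t) -
      (1 * (2 * Real.cosh t + 1) + t * (2 * Real.sinh t))) ha
    (fun t _ => by
      beta_reduce
      have h1 := (Real.hasDerivAt_sinh t).mul ((Real.hasDerivAt_cosh t).add_const 2)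
      have h2 := (hasDerivAt_id t).mul (((Real.hasDerivAt_cosh t).const_mul 2).add_const 1)
      exact h1.sub h2)
    (fun t htI => by
      beta_reduce
      have hs := Real.self_lt_sinh_iff.mpr htI.1
      have hsp := Real.sinh_pos_iff.mpr htI.1
      nlinarith [Real.cosh_sq_sub_sinh_sq t])
  have key2 : (0:ℝ) < Real.sinh a * (Real.cosh a + 2) - a * (2 * Real.cosh a + 1) := by
    simpa using key
  unfold φ
  rw [Real.sinh_two_mul]
  nlinarith [key2]

lemma lemB {r b : ℝ} (hr : 0 < r) (hb0 : 0 < b) (hb1 : b < 1) :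
    4 * r * (1 - b ^ 2) * ψ (r * b) * ψ r < b ^ 2 * (ψ r - ψ (r * b)) * φ (2 * r) := by
  have hFr : 0 < φ (2 * r) := phi_pos (by linarith)
  set K := 4 * r / φ (2 * r) with hK
  have key : (fun c : ℝ => (ψ (r * c))⁻¹ - K * ((c ^ 2)⁻¹)) 1 <
      (fun c : ℝ => (ψ (r * c))⁻¹ - K * ((c ^ 2)⁻¹)) b := by
    apply my_anti (fun c : ℝ => (ψ (r * c))⁻¹ - K * ((c ^ 2)⁻¹))
      (fun c => -((Real.sinh (r * c) * Real.cosh (r * c) - r * c) / (Real.sinh (r * c)) ^ 2 * r) /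
          (ψ (r * c)) ^ 2 - K * (-(2 * c ^ 1) / ((c ^ 2) ^ 2))) hb1
    · intro c hc
      beta_reduce
      have hc0 : 0 < c := lt_of_lt_of_le hb0 hc.1
      have ha : 0 < r * c := mul_pos hr hc0
      have hψ := psi_pos ha
      have h1 : HasDerivAt (fun c => ψ (r * c))
          ((Real.sinh (r * c) * Real.cosh (r * c) - r * c) / (Real.sinh (r * c)) ^ 2 * r) c := by
        have := (hasDerivAt_psi ha).comp c ((hasDerivAt_id c).const_mul r)
        exact this.congr_deriv (by ring)
      have h2 := h1.inv (ne_of_gt hψ)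
      have h3 : HasDerivAt (fun c : ℝ => (c ^ 2)⁻¹) (-(2 * c ^ 1) / ((c ^ 2) ^ 2)) c :=
        (hasDerivAt_pow 2 c).inv (by positivity)
      exact h2.sub (h3.const_mul K)
    · intro c hcI
      beta_reduce
      have hc0 : 0 < c := hb0.trans hcI.1
      have hc1 : c < 1 := hcI.2
      have ha : 0 < r * c := mul_pos hr hc0
      have hS : 0 < Real.sinh (r * c) := Real.sinh_pos_iff.mpr ha
      have hN : 0 < (r * c) * Real.cosh (r * c) - Real.sinh (r * c) := num_pos ha
      have hFx : 0 < φ (2 * (r * c)) := phi_pos (by linarith)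
      have hC := lemC ha
      have hA2 : φ (2 * (r * c)) < c ^ 3 * φ (2 * r) := lemA hc0 hc1 hr
      have hψeq : ψ (r * c) = ((r * c) * Real.cosh (r * c) - Real.sinh (r * c)) / Real.sinh (r * c) :=
        psi_eq _ hS.ne'
      have hnum : Real.sinh (r * c) * Real.cosh (r * c) - r * c = φ (2 * (r * c)) / 2 := by
        unfold φ; rw [Real.sinh_two_mul]; ring
      have hψpos := psi_pos ha
      have hE : -((Real.sinh (r * c) * Real.cosh (r * c) - r * c) / (Real.sinh (r * c)) ^ 2 * r) /
          (ψ (r * c)) ^ 2 - K * (-(2 * c ^ 1) / ((c ^ 2) ^ 2)) =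
          8 * r / (φ (2 * r) * c ^ 3) -
          r * (Real.sinh (r * c) * Real.cosh (r * c) - r * c) /
            ((r * c) * Real.cosh (r * c) - Real.sinh (r * c)) ^ 2 := by
        rw [hψeq, hK]
        field_simp
        ring
      rw [hE]
      have h5 : 16 * ((r * c) * Real.cosh (r * c) - Real.sinh (r * c)) ^ 2 ≤ φ (2 * (r * c)) ^ 2 := by
        nlinarith [mul_le_mul hC hC (by positivity) hFx.le]
      have h6 : φ (2 * (r * c)) * φ (2 * (r * c)) < φ (2 * (r * c)) * (c ^ 3 * φ (2 * r)) :=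
        mul_lt_mul_of_pos_left hA2 hFx
      have hgoal : 8 * r / (φ (2 * r) * c ^ 3) <
          r * (Real.sinh (r * c) * Real.cosh (r * c) - r * c) /
            ((r * c) * Real.cosh (r * c) - Real.sinh (r * c)) ^ 2 := by
        rw [div_lt_div_iff₀ (by positivity) (by positivity), hnum]
        nlinarith [mul_le_mul_of_nonneg_left h5 hr.le, mul_lt_mul_of_pos_left h6 hr]
      linarith
  have hψr := psi_pos hr
  have hψx := psi_pos (mul_pos hr hb0)
  simp only [mul_one, one_pow, inv_one] at key
  have hdiff : 0 < (ψ (r * b))⁻¹ - K * (b ^ 2)⁻¹ - ((ψ r)⁻¹ - K) := by linarith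
  have hposprod : 0 < ψ (r * b) * ψ r * b ^ 2 * φ (2 * r) := by positivity
  have hmul : ((ψ (r * b))⁻¹ - K * (b ^ 2)⁻¹ - ((ψ r)⁻¹ - K)) *
      (ψ (r * b) * ψ r * b ^ 2 * φ (2 * r)) =
      b ^ 2 * (ψ r - ψ (r * b)) * φ (2 * r) - 4 * r * (1 - b ^ 2) * ψ (r * b) * ψ r := by
    rw [hK]; field_simp; linear_combination (4 * r * b ^ 2 * ψ (r * b) * ψ r - 4 * r * ψ (r * b) * ψ r) * mul_inv_cancel₀ (show φ (r * 2) ≠ 0 by rw [mul_comm]; exact hFr.ne')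
  nlinarith [mul_pos hdiff hposprod, hmul]

theorem stmt_13 (s r β : ℝ) (hs0 : 0 < s) (hs1 : s < 1) (hr : 0 < r)
    (hβl : s ^ 2 < β) (hβu : β < 1)
    (P₁ P₂sq P₃ : ℝ)
    (hP₁ : P₁ = 2 * Real.sqrt β * (ψ (r * Real.sqrt β) - ψ r) / r)
    (hP₂sq : P₂sq = 16 * (β - s ^ 2) * (1 - β) * (ψ (r * Real.sqrt β)) ^ 2 / β)
    (hP₃ : P₃ = (1 / (2 * β * Real.sqrt β)) *
      ((s ^ 2 / Real.sqrt β) * φ (2 * r * Real.sqrt β) - β ^ 2 * φ (2 * r) +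
        4 * r * (β - s ^ 2) * (1 - β) * ψ (r * Real.sqrt β))) :
    P₂sq - 4 * P₁ * P₃ < 0 := by
  have hβ0 : 0 < β := lt_trans (by positivity) hβl
  set b := Real.sqrt β with hbdef
  have hb2 : b ^ 2 = β := Real.sq_sqrt hβ0.le
  have hb0 : 0 < b := Real.sqrt_pos.mpr hβ0
  have hb1 : b < 1 := by nlinarith [hb2]
  have hsb : s < b := by nlinarith [hb2]
  set ψx := ψ (r * b) with hψxdef
  set ψr := ψ r with hψrdef
  have hψx : 0 < ψx := psi_pos (mul_pos hr hb0)
  have hψlt : ψx < ψr := psi_mono (mul_pos hr hb0) (by nlinarith)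
  have hFr : 0 < φ (2 * r) := phi_pos (by linarith)
  have hA : φ (2 * r * b) < b ^ 3 * φ (2 * r) := by
    have h := lemA hb0 hb1 hr
    rwa [show 2 * (r * b) = 2 * r * b from by ring] at h
  have hB : 4 * r * (1 - b ^ 2) * ψx * ψr < b ^ 2 * (ψr - ψx) * φ (2 * r) := lemB hr hb0 hb1
  have hFx : 0 < φ (2 * r * b) := phi_pos (by positivity)
  have hkey : 4 * r * b * (b ^ 2 - s ^ 2) * (1 - b ^ 2) * ψx * ψr +
      s ^ 2 * (ψr - ψx) * φ (2 * r * b) - b ^ 5 * (ψr - ψx) * φ (2 * r) < 0 := by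
    have h1 : s ^ 2 * (ψr - ψx) * φ (2 * r * b) < s ^ 2 * (ψr - ψx) * (b ^ 3 * φ (2 * r)) :=
      mul_lt_mul_of_pos_left hA (mul_pos (by positivity) (by linarith))
    have h2 : (b ^ 2 - s ^ 2) * b * (4 * r * (1 - b ^ 2) * ψx * ψr) <
        (b ^ 2 - s ^ 2) * b * (b ^ 2 * (ψr - ψx) * φ (2 * r)) :=
      mul_lt_mul_of_pos_left hB (by nlinarith)
    nlinarith [h1, h2]
  have hrne : r ≠ 0 := hr.ne'
  have hbne : b ≠ 0 := hb0.ne'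
  have heq : P₂sq - 4 * P₁ * P₃ = (4 / (r * b ^ 3)) *
      (4 * r * b * (b ^ 2 - s ^ 2) * (1 - b ^ 2) * ψx * ψr +
        s ^ 2 * (ψr - ψx) * φ (2 * r * b) - b ^ 5 * (ψr - ψx) * φ (2 * r)) := by
    rw [hP₁, hP₂sq, hP₃, ← hb2]
    field_simp
    ring
  rw [heq]
  exact mul_neg_of_pos_of_neg (by positivity) hkey
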